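/- arXiv:2112.10072 — 6 statements merged into one kernel-verified Lean document; each statement's English description precedes it below -/
import Mathlib

section
/- In a category B with finite limits, a morphism p : x ⟶ y is an almost descent morphism (i.e., the Eilenberg–Moore comparison functor K^p is faithful) if and only if p is a pullback-stable epimorphism (every pullback of p along any morphism is an epimorphism). -/
open CategoryTheory CategoryTheory.Limits

/-- A morphism `p` is a pullback-stable epimorphism if in every pullback square over `p`,
the side opposite to `p` is an epimorphism. -/
def IsPullbackStableEpi {B : Type*} [Category B] {x y : B} (p : x ⟶ y) : Prop :=
  ∀ {P W : B} (fst : P ⟶ x) (snd : P ⟶ W) (g : W ⟶ y),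
    IsPullback fst snd p g → Epi snd

/-- Faithfulness of `Over.pullback p` implies pullback-stable epi. -/
lemma pullback_faithful_iff_stable_epi
    {B : Type*} [Category B] [HasFiniteLimits B] {x y : B} (p : x ⟶ y) :
    (Over.pullback p).Faithful ↔ IsPullbackStableEpi p := by
  constructor
  · intro hF
    intro P W fst snd g hpb
    constructor
    intro Z h k hhk
    -- transfer to the canonical pullback
    have hpb' := hpb.flip
    have e := hpb'.isoPullback
    have hsnd : hpb'.isoPullback.hom ≫ pullback.fst g p = snd := hpb'.isoPullback_hom_fst
    have hfstP : pullback.fst g p ≫ h = pullback.fst g p ≫ k := by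
      have : hpb'.isoPullback.hom ≫ pullback.fst g p ≫ h =
          hpb'.isoPullback.hom ≫ pullback.fst g p ≫ k := by
        rw [← Category.assoc, ← Category.assoc, hsnd, hhk]
      exact (cancel_epi hpb'.isoPullback.hom).mp this
    -- build two Over maps
    let A : Over y := Over.mk g
    let Zy : Over y := Over.mk (prod.snd : Z ⨯ y ⟶ y)
    let f1 : A ⟶ Zy := Over.homMk (prod.lift h g) (by exact prod.lift_snd h g)
    let f2 : A ⟶ Zy := Over.homMk (prod.lift k g) (by exact prod.lift_snd k g)
    have : (Over.pullback p).map f1 = (Over.pullback p).map f2 := by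
      ext; simp [f1, f2, A, Zy, hfstP]
    have hf : f1 = f2 := hF.map_injective this
    have : prod.lift h g = prod.lift k g := congrArg CommaMorphism.left hf
    have := congrArg (· ≫ (prod.fst : Z ⨯ y ⟶ Z)) this
    exact (prod.lift_fst h g).symm.trans (this.trans (prod.lift_fst k g))
  · intro hE
    constructor
    intro A C f g' hfg
    have hpb : IsPullback (pullback.snd A.hom p) (pullback.fst A.hom p) p A.hom :=
      (IsPullback.of_hasPullback A.hom p).flip
    have hepi : Epi (pullback.fst A.hom p) := hE _ _ _ hpb
    ext
    have h1 := congrArg CommaMorphism.left hfg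
    have h2 := congrArg (· ≫ (pullback.fst C.hom p)) h1
    simp only [Over.pullback_map_left, pullback.lift_fst] at h2
    exact (cancel_epi (pullback.fst A.hom p)).mp h2

/-- In a category with finite limits, `p` is an almost descent morphism (the Eilenberg–Moore
comparison functor of the adjunction `p_! ⊣ p^*` is faithful) iff `p` is a pullback-stable
epimorphism. -/
theorem almost_descent_iff_pullback_stable_epi
    {B : Type*} [Category B] [HasFiniteLimits B] {x y : B} (p : x ⟶ y) :
    (Monad.comparison (Over.mapPullbackAdj p)).Faithful ↔ IsPullbackStableEpi p := by
  rw [← pullback_faithful_iff_stable_epi]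
  constructor
  · intro hK
    exact Functor.Faithful.of_iso (Monad.comparisonForget (Over.mapPullbackAdj p))
  · intro hR
    infer_instance
end

section
/- In a category B with finite limits, a morphism p : x ⟶ y is a descent morphism (i.e., the Eilenberg–Moore comparison functor K^p is fully faithful) if and only if p is a pullback-stable regular epimorphism (every pullback of p along any morphism is a regular epimorphism). -/
set_option maxRecDepth 4000

open CategoryTheory CategoryTheory.Limits

/-- A morphism `p` is a pullback-stable regular epimorphism if in every pullback square over
`p`, the side opposite to `p` is a regular epimorphism. -/
def IsPullbackStableRegularEpi {B : Type*} [Category B] {x y : B} (p : x ⟶ y) : Prop :=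
  ∀ {P W : B} (fst : P ⟶ x) (snd : P ⟶ W) (g : W ⟶ y),
    IsPullback fst snd p g → Nonempty (RegularEpi snd)

namespace DescentAux

section General

variable {C D : Type*} [Category C] [Category D] {L : C ⥤ D} {R : D ⥤ C} (adj : L ⊣ R)

theorem beck_algebra_hom_cond (A : D) {Z : D} (π : L.obj (R.obj A) ⟶ Z)
    (hs : L.map (R.map (adj.counit.app A)) ≫ π = adj.counit.app (L.obj (R.obj A)) ≫ π) :
    (adj.toMonad).map (adj.unit.app (R.obj A) ≫ R.map π) ≫ R.map (adj.counit.app Z)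
      = R.map (adj.counit.app A) ≫ (adj.unit.app (R.obj A) ≫ R.map π) := by
  dsimp [Adjunction.toMonad]
  rw [L.map_comp, R.map_comp, Category.assoc, ← R.map_comp,
    adj.counit_naturality π, R.map_comp, ← Category.assoc, ← R.map_comp,
    adj.left_triangle_components, R.map_id, Category.id_comp]
  have h1 : R.map (adj.counit.app A) ≫ adj.unit.app (R.obj A)
      = adj.unit.app (R.obj (L.obj (R.obj A))) ≫ R.map (L.map (R.map (adj.counit.app A))) := by
    simpa using (adj.unit_naturality (R.map (adj.counit.app A))).symm
  rw [← Category.assoc, h1, Category.assoc, ← R.map_comp, hs, R.map_comp,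
    adj.right_triangle_components_assoc]

/-- If the comparison functor of an adjunction is fully faithful, each counit component is a
coequalizer of its Beck parallel pair. -/
noncomputable def beckCoforkIsColimit
    [(Monad.comparison adj).Full] [(Monad.comparison adj).Faithful] (A : D) :
    IsColimit (Cofork.ofπ (adj.counit.app A) (adj.counit_naturality (adj.counit.app A))) := by
  have Rmap_eq : ∀ {Z : D} (f : A ⟶ Z), R.map f
      = adj.unit.app (R.obj A) ≫ R.map (adj.counit.app A ≫ f) := by
    intro Z f
    rw [R.map_comp, adj.right_triangle_components_assoc]
  refine Cofork.IsColimit.mk _ (fun s => ((Monad.comparison adj).map_surjective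
      ⟨adj.unit.app (R.obj A) ≫ R.map s.π, beck_algebra_hom_cond adj A s.π s.condition⟩).choose)
      (fun s => ?_) (fun s m hm => ?_)
  · -- fac
    have hRf := congrArg Monad.Algebra.Hom.f ((Monad.comparison adj).map_surjective
      ⟨adj.unit.app (R.obj A) ≫ R.map s.π, beck_algebra_hom_cond adj A s.π s.condition⟩).choose_spec
    dsimp at hRf
    simp only [Cofork.π_ofπ]
    apply (adj.homEquiv _ _).injective
    rw [adj.homEquiv_unit, adj.homEquiv_unit, ← Rmap_eq]; exact hRf
  · -- uniq
    have hRf := congrArg Monad.Algebra.Hom.f ((Monad.comparison adj).map_surjective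
      ⟨adj.unit.app (R.obj A) ≫ R.map s.π, beck_algebra_hom_cond adj A s.π s.condition⟩).choose_spec
    dsimp at hRf
    apply (Monad.comparison adj).map_injective
    ext
    dsimp
    simp only [Cofork.π_ofπ] at hm
    rw [hRf]; change R.map m = _; rw [Rmap_eq m, hm]; rfl

/-- Regular epimorphisms are stable under precomposition with isomorphisms. -/
noncomputable def regularEpiIsoComp {X Y Z : D} (e : Z ⟶ X) [IsIso e] (f : X ⟶ Y)
    (h : RegularEpi f) : RegularEpi (e ≫ f) where
  W := h.W
  left := h.left ≫ inv e
  right := h.right ≫ inv e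
  w := by rw [Category.assoc, IsIso.inv_hom_id_assoc, Category.assoc, IsIso.inv_hom_id_assoc, h.w]
  isColimit := by
    refine Cofork.IsColimit.mk _
      (fun s => h.isColimit.desc (Cofork.ofπ (inv e ≫ s.π) (by simpa using s.condition)))
      (fun s => ?_) (fun s m hm => ?_)
    · have := Cofork.IsColimit.π_desc (t := Cofork.ofπ (inv e ≫ s.π)
        (by simpa using s.condition)) h.isColimit
      simp only [Cofork.π_ofπ] at this ⊢
      rw [Category.assoc, this, IsIso.hom_inv_id_assoc]
    · have := Cofork.IsColimit.π_desc (t := Cofork.ofπ (inv e ≫ s.π)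
        (by simpa using s.condition)) h.isColimit
      simp only [Cofork.π_ofπ] at this hm ⊢
      apply Cofork.IsColimit.hom_ext h.isColimit
      simp only [Cofork.π_ofπ]
      rw [this, ← hm, Category.assoc, IsIso.inv_hom_id_assoc]

end General

section Slice

variable {B : Type*} [Category B] [HasFiniteLimits B] {x y : B} (p : x ⟶ y) (A : Over y)

theorem v_w : (pullback.fst (pullback.snd A.hom p ≫ p) p ≫ pullback.fst A.hom p) ≫ A.hom
    = pullback.snd (pullback.snd A.hom p ≫ p) p ≫ p := by
  rw [Category.assoc, pullback.condition]; exact pullback.condition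

theorem kp : IsKernelPair (pullback.fst A.hom p)
    (pullback.fst (pullback.snd A.hom p ≫ p) p)
    (pullback.lift (pullback.fst _ _ ≫ pullback.fst A.hom p) (pullback.snd _ _) (v_w p A)) := by
  have comm : pullback.fst (pullback.snd A.hom p ≫ p) p ≫ pullback.fst A.hom p
      = pullback.lift (pullback.fst _ _ ≫ pullback.fst A.hom p) (pullback.snd _ _) (v_w p A)
        ≫ pullback.fst A.hom p := by
    rw [pullback.lift_fst]
  apply IsPullback.of_isLimit (PullbackCone.IsLimit.mk comm
    (fun s => pullback.lift s.fst (s.snd ≫ pullback.snd A.hom p) ?_)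
    (fun s => ?_) (fun s => ?_) (fun s m h₁ h₂ => ?_))
  · rw [← pullback.condition, ← Category.assoc, s.condition, Category.assoc, Category.assoc,
      pullback.condition]
  · exact pullback.lift_fst _ _ _
  · apply pullback.hom_ext
    · rw [Category.assoc, pullback.lift_fst, ← Category.assoc, pullback.lift_fst, s.condition]
    · rw [Category.assoc, pullback.lift_snd, pullback.lift_snd]
  · apply pullback.hom_ext
    · rw [pullback.lift_fst]; exact h₁
    · rw [pullback.lift_snd]
      have h₃ : (m ≫ pullback.lift (pullback.fst _ _ ≫ pullback.fst A.hom p)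
          (pullback.snd _ _) (v_w p A)) ≫ pullback.snd A.hom p
          = s.snd ≫ pullback.snd A.hom p := by rw [h₂]
      rwa [Category.assoc, pullback.lift_snd] at h₃

theorem eps_left : (((Over.mapPullbackAdj p).counit.app A).left : pullback A.hom p ⟶ A.left)
    = pullback.fst A.hom p := by simp

theorem eps2_left : ((Over.mapPullbackAdj p).counit.app
      ((Over.map p).obj ((Over.pullback p).obj A))).left
    = (pullback.fst (pullback.snd A.hom p ≫ p) p :
        pullback (pullback.snd A.hom p ≫ p) p ⟶ pullback A.hom p) := by
  simp

theorem eps1_left :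
    (((Over.map p).map ((Over.pullback p).map ((Over.mapPullbackAdj p).counit.app A))).left :
      pullback (pullback.snd A.hom p ≫ p) p ⟶ pullback A.hom p)
    = pullback.lift (pullback.fst _ _ ≫ pullback.fst A.hom p) (pullback.snd _ _) (v_w p A) := by
  simp

end Slice

end DescentAux

namespace DescentAux

section Main

variable {B : Type*} [Category B] [HasFiniteLimits B] {x y : B} (p : x ⟶ y)

theorem faithful_of_stable (hs : IsPullbackStableRegularEpi p) :
    (Monad.comparison (Over.mapPullbackAdj p)).Faithful := by
  constructor
  intro A A' f g hfg
  have hRf : (Over.pullback p).map f = (Over.pullback p).map g :=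
    congrArg Monad.Algebra.Hom.f hfg
  haveI : RegularEpi (pullback.fst A.hom p) :=
    (hs _ _ A.hom (IsPullback.of_hasPullback A.hom p).flip).some
  have h1 : (Over.mapPullbackAdj p).counit.app A ≫ f
      = (Over.mapPullbackAdj p).counit.app A ≫ g := by
    have n1 := ((Over.mapPullbackAdj p).counit.naturality f)
    have n2 := ((Over.mapPullbackAdj p).counit.naturality g)
    dsimp at n1 n2
    rw [← n1, ← n2, hRf]
  apply Over.OverMorphism.ext
  have h2 := congrArg CommaMorphism.left h1
  simp only [Over.comp_left] at h2
  rw [eps_left] at h2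
  exact (RegularEpi.epi _ this).left_cancellation _ _ h2

theorem full_of_stable (hs : IsPullbackStableRegularEpi p) :
    (Monad.comparison (Over.mapPullbackAdj p)).Full := by
  constructor
  intro A A' φ
  haveI : RegularEpi (pullback.fst A.hom p) :=
    (hs _ _ A.hom (IsPullback.of_hasPullback A.hom p).flip).some
  haveI hepi := RegularEpi.epi _ this
  have hφ := φ.h
  dsimp [Adjunction.toMonad] at hφ
  set f : (Over.pullback p).obj A ⟶ (Over.pullback p).obj A' := φ.f with hf
  have hφ' : (Over.pullback p).map ((Over.map p).map f) ≫
      (Over.pullback p).map ((Over.mapPullbackAdj p).counit.app A')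
      = (Over.pullback p).map ((Over.mapPullbackAdj p).counit.app A) ≫ f := hφ
  -- the candidate map out of L R A
  set h : (Over.map p).obj ((Over.pullback p).obj A) ⟶ A' :=
    (Over.map p).map f ≫ (Over.mapPullbackAdj p).counit.app A' with hh
  have cond : (Over.map p).map ((Over.pullback p).map ((Over.mapPullbackAdj p).counit.app A)) ≫ h
      = (Over.mapPullbackAdj p).counit.app ((Over.map p).obj ((Over.pullback p).obj A)) ≫ h := by
    have n1 := (Over.mapPullbackAdj p).counit.naturality ((Over.mapPullbackAdj p).counit.app A')
    have n2 := (Over.mapPullbackAdj p).counit.naturality ((Over.map p).map f)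
    dsimp at n1 n2
    rw [hh, ← Category.assoc, ← Functor.map_comp, ← hφ', Functor.map_comp, Category.assoc,
      n1, ← Category.assoc, n2, Category.assoc]
  have condL := congrArg CommaMorphism.left cond
  simp only [Over.comp_left] at condL
  rw [eps1_left, eps2_left] at condL
  have hcoeq := (kp p A).toCoequalizer this
  have condB : pullback.fst (pullback.snd A.hom p ≫ p) p ≫ h.left
      = pullback.lift (pullback.fst _ _ ≫ pullback.fst A.hom p) (pullback.snd _ _) (v_w p A)
        ≫ h.left := condL.symm
  have hfac : pullback.fst A.hom p ≫ hcoeq.desc (Cofork.ofπ h.left condB) = h.left := by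
    exact Cofork.IsColimit.π_desc hcoeq
  have hw : hcoeq.desc (Cofork.ofπ h.left condB) ≫ A'.hom = A.hom := by
    rw [← cancel_epi (pullback.fst A.hom p), ← Category.assoc, hfac, Over.w h]
    exact pullback.condition.symm
  refine ⟨Over.homMk (hcoeq.desc (Cofork.ofπ h.left condB)) hw, ?_⟩
  apply Monad.Algebra.Hom.ext
  change (Over.pullback p).map (Over.homMk _ hw) = f
  apply Over.OverMorphism.ext
  apply pullback.hom_ext
  · simp only [Over.pullback_map_left, pullback.lift_fst]
    simp only [Over.homMk_left]
    rw [hfac, hh]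
    simp [eps_left]
  · simp only [Over.pullback_map_left, pullback.lift_snd]
    exact (Over.w φ.f).symm

/-- The comparison map into the product used for the converse direction. -/
noncomputable def hmap (A : Over y) {Z : B} (π : pullback A.hom p ⟶ Z) :
    (Over.map p).obj ((Over.pullback p).obj A) ⟶ Over.mk (Limits.prod.fst : y ⨯ Z ⟶ y) :=
  Over.homMk (prod.lift ((Over.map p).obj ((Over.pullback p).obj A)).hom π) (by exact prod.lift_fst _ _)

theorem hmap_cond (A : Over y) {Z : B} (π : pullback A.hom p ⟶ Z)
    (hπ : pullback.fst (pullback.snd A.hom p ≫ p) p ≫ π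
      = pullback.lift (pullback.fst _ _ ≫ pullback.fst A.hom p) (pullback.snd _ _) (v_w p A) ≫ π) :
    (Over.map p).map ((Over.pullback p).map ((Over.mapPullbackAdj p).counit.app A)) ≫ hmap p A π
      = (Over.mapPullbackAdj p).counit.app ((Over.map p).obj ((Over.pullback p).obj A))
          ≫ hmap p A π := by
  apply Over.OverMorphism.ext
  simp only [Over.comp_left, hmap, Over.homMk_left]
  apply Limits.prod.hom_ext
  · simp [Over.w]
    rw [prod.lift_fst, prod.lift_fst, pullback.lift_snd_assoc]
    exact pullback.condition.symm
  · simp only [Category.assoc, prod.lift_snd]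
    rw [eps1_left, eps2_left]
    exact hπ.symm

/-- If the comparison functor is fully faithful, `pullback.fst A.hom p` is a coequalizer of
the (underlying) Beck pair. -/
noncomputable def coforkB [(Monad.comparison (Over.mapPullbackAdj p)).Full]
    [(Monad.comparison (Over.mapPullbackAdj p)).Faithful] (A : Over y) :
    IsColimit (Cofork.ofπ (pullback.fst A.hom p) (kp p A).w) := by
  have hc := beckCoforkIsColimit (Over.mapPullbackAdj p) A
  have desc_left : ∀ (t : Cofork ((Over.map p).map ((Over.pullback p).map
        ((Over.mapPullbackAdj p).counit.app A)))
        ((Over.mapPullbackAdj p).counit.app ((Over.map p).obj ((Over.pullback p).obj A)))),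
      pullback.fst A.hom p ≫ (hc.desc t).left = t.π.left := by
    intro t
    have := congrArg CommaMorphism.left (Cofork.IsColimit.π_desc (t := t) hc)
    simp only [Cofork.π_ofπ, Over.comp_left] at this
    rwa [eps_left] at this
  refine Cofork.IsColimit.mk _
    (fun s => (hc.desc (Cofork.ofπ (hmap p A s.π) (hmap_cond p A s.π s.condition))).left ≫ Limits.prod.snd)
    (fun s => ?_) (fun s m hm => ?_)
  · simp only [Cofork.π_ofπ, ← Category.assoc]
    rw [desc_left]
    exact prod.lift_snd _ _
  · simp only [Cofork.π_ofπ] at hm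
    change A.left ⟶ s.pt at m
    let fm : A ⟶ Over.mk (Limits.prod.fst : y ⨯ s.pt ⟶ y) :=
      Over.homMk (prod.lift A.hom m) (by exact prod.lift_fst _ _)
    have fml : fm.left = prod.lift A.hom m := rfl
    have hf' : (Over.mapPullbackAdj p).counit.app A ≫ fm = hmap p A s.π := by
      apply Over.OverMorphism.ext
      simp only [Over.comp_left, fml, hmap, Over.homMk_left]
      apply Limits.prod.hom_ext
      · simp only [Category.assoc, prod.lift_fst]
        simpa using Over.w ((Over.mapPullbackAdj p).counit.app A)
      · simp only [Category.assoc]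
        have hl2 : prod.lift A.hom m ≫ (Limits.prod.snd : y ⨯ s.pt ⟶ s.pt) = m :=
          prod.lift_snd _ _
        rw [hl2, prod.lift_snd, eps_left]
        exact hm
    have heq : fm = hc.desc (Cofork.ofπ (hmap p A s.π) (hmap_cond p A s.π s.condition)) := by
      apply Cofork.IsColimit.hom_ext hc
      have hd := Cofork.IsColimit.π_desc
        (t := Cofork.ofπ (hmap p A s.π) (hmap_cond p A s.π s.condition)) hc
      simp only [Cofork.π_ofπ] at hd ⊢
      rw [hf', hd]
    have hfin := congrArg (fun q : A ⟶ Over.mk (Limits.prod.fst : y ⨯ s.pt ⟶ y) =>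
      CommaMorphism.left q ≫ (Limits.prod.snd : y ⨯ s.pt ⟶ s.pt)) heq
    change prod.lift A.hom m ≫ (Limits.prod.snd : y ⨯ s.pt ⟶ s.pt) = _ at hfin
    rw [prod.lift_snd] at hfin; exact hfin

theorem stable_of_ff [(Monad.comparison (Over.mapPullbackAdj p)).Full]
    [(Monad.comparison (Over.mapPullbackAdj p)).Faithful] :
    IsPullbackStableRegularEpi p := by
  intro P W f1 s1 g hpb
  haveI : RegularEpi (pullback.fst (Over.mk g).hom p) :=
    ⟨_, _, _, (kp p (Over.mk g)).w, coforkB p (Over.mk g)⟩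
  have h2 : IsPullback (pullback.snd (Over.mk g).hom p) (pullback.fst (Over.mk g).hom p) p g :=
    (IsPullback.of_hasPullback (Over.mk g).hom p).flip
  refine ⟨?_⟩
  rw [← IsPullback.isoIsPullback_hom_snd x W hpb h2]
  exact regularEpiIsoComp _ _ this

end Main

end DescentAux

/-- In a category with finite limits, `p` is a descent morphism (the Eilenberg–Moore
comparison functor of the adjunction `p_! ⊣ p^*` is fully faithful) iff `p` is a
pullback-stable regular epimorphism. -/
theorem descent_iff_pullback_stable_regularEpi
    {B : Type*} [Category B] [HasFiniteLimits B] {x y : B} (p : x ⟶ y) :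
    ((Monad.comparison (Over.mapPullbackAdj p)).Full ∧
      (Monad.comparison (Over.mapPullbackAdj p)).Faithful) ↔
    IsPullbackStableRegularEpi p := by
  constructor
  · rintro ⟨hF, hFa⟩
    exact DescentAux.stable_of_ff p
  · intro hs
    exact ⟨DescentAux.full_of_stable p hs, DescentAux.faithful_of_stable p hs⟩
end

section
/- Let B be a category with finite limits and p : x ⟶ y a morphism. The Eilenberg–Moore comparison functor K^p : B↓y → Desc(p) is fully faithful if and only if every counit component ε_f : p_!(p^* f) ⟶ f of the adjunction p_! ⊣ p^* is a regular epimorphism in the slice category B↓y. -/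
open CategoryTheory CategoryTheory.Limits

section General

variable {C : Type*} {D : Type*} [Category C] [Category D]
  {L : C ⥤ D} {R : D ⥤ C} (adj : L ⊣ R)

/-- If every counit component is an epimorphism, then `R` is faithful. -/
theorem faithful_of_counit_epi (h : ∀ A : D, Epi (adj.counit.app A)) : R.Faithful := by
  constructor
  intro A B f g hfg
  have : L.map (R.map f) ≫ adj.counit.app B = L.map (R.map g) ≫ adj.counit.app B := by
    rw [hfg]
  have this := (adj.counit_naturality f).symm.trans (this.trans (adj.counit_naturality g))
  exact (cancel_epi (adj.counit.app A)).mp this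

/-- If the comparison functor is faithful, counit components are epi. -/
theorem counit_epi_of_comparison_faithful
    [(Monad.comparison adj).Faithful] (A : D) : Epi (adj.counit.app A) := by
  constructor
  intro Z f g hfg
  have hR : R.map f = R.map g := by
    have : R.map (adj.counit.app A) ≫ R.map f = R.map (adj.counit.app A) ≫ R.map g := by
      rw [← R.map_comp, ← R.map_comp, hfg]
    have h2 := congrArg (fun t => adj.unit.app (R.obj A) ≫ t) this
    simpa [adj.right_triangle_components_assoc] using h2
  have : (Monad.comparison adj).map f = (Monad.comparison adj).map g := by
    apply Monad.Algebra.Hom.ext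
    exact hR
  exact (Monad.comparison adj).map_injective this

/-- The algebra-morphism compatibility condition for the canonical candidate morphism. -/
theorem candidate_algebra_compat (A Z : D) (π : L.obj (R.obj A) ⟶ Z)
    (hcond : adj.counit.app (L.obj (R.obj A)) ≫ π = L.map (R.map (adj.counit.app A)) ≫ π) :
    R.map (L.map (adj.unit.app (R.obj A) ≫ R.map π)) ≫ R.map (adj.counit.app Z)
      = R.map (adj.counit.app A) ≫ (adj.unit.app (R.obj A) ≫ R.map π) := by
  have h1 : L.map (R.map π) ≫ adj.counit.app Z = adj.counit.app (L.obj (R.obj A)) ≫ π :=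
    adj.counit_naturality π
  have h2 : R.map (adj.counit.app A) ≫ adj.unit.app (R.obj A)
      = adj.unit.app (R.obj (L.obj (R.obj A))) ≫ R.map (L.map (R.map (adj.counit.app A))) :=
    (adj.unit_naturality (R.map (adj.counit.app A))).symm
  calc R.map (L.map (adj.unit.app (R.obj A) ≫ R.map π)) ≫ R.map (adj.counit.app Z)
      = R.map (L.map (adj.unit.app (R.obj A) ≫ R.map π) ≫ adj.counit.app Z) :=
        (R.map_comp _ _).symm
    _ = R.map (L.map (adj.unit.app (R.obj A)) ≫ L.map (R.map π) ≫ adj.counit.app Z) := by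
        rw [L.map_comp, Category.assoc]
    _ = R.map (L.map (adj.unit.app (R.obj A)) ≫ adj.counit.app (L.obj (R.obj A)) ≫ π) := by
        rw [h1]
    _ = R.map ((L.map (adj.unit.app (R.obj A)) ≫ adj.counit.app (L.obj (R.obj A))) ≫ π) := by
        rw [Category.assoc]
    _ = R.map (𝟙 (L.obj (R.obj A)) ≫ π) :=
        congrArg (fun t => R.map (t ≫ π)) (adj.left_triangle_components (R.obj A))
    _ = R.map π := congrArg R.map (Category.id_comp π)
    _ = (adj.unit.app (R.obj (L.obj (R.obj A))) ≫ R.map (adj.counit.app (L.obj (R.obj A))))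
          ≫ R.map π := by
        rw [adj.right_triangle_components]
        exact (Category.id_comp (R.map π)).symm
    _ = adj.unit.app (R.obj (L.obj (R.obj A)))
          ≫ R.map (adj.counit.app (L.obj (R.obj A)) ≫ π) := by
        rw [Category.assoc, R.map_comp]
    _ = adj.unit.app (R.obj (L.obj (R.obj A)))
          ≫ R.map (L.map (R.map (adj.counit.app A)) ≫ π) := by rw [hcond]
    _ = (adj.unit.app (R.obj (L.obj (R.obj A))) ≫ R.map (L.map (R.map (adj.counit.app A))))
          ≫ R.map π := by rw [R.map_comp, Category.assoc]
    _ = (R.map (adj.counit.app A) ≫ adj.unit.app (R.obj A)) ≫ R.map π := by rw [← h2]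
    _ = R.map (adj.counit.app A) ≫ (adj.unit.app (R.obj A) ≫ R.map π) := Category.assoc _ _ _

/-- Any morphism coequalizing the canonical pair factors through the counit,
when the comparison functor is full. -/
theorem exists_fac_of_comparison_full
    [(Monad.comparison adj).Full] (A Z : D) (π : L.obj (R.obj A) ⟶ Z)
    (hcond : adj.counit.app (L.obj (R.obj A)) ≫ π = L.map (R.map (adj.counit.app A)) ≫ π) :
    ∃ f : A ⟶ Z, adj.counit.app A ≫ f = π := by
  let φ : (Monad.comparison adj).obj A ⟶ (Monad.comparison adj).obj Z :=
    { f := adj.unit.app (R.obj A) ≫ R.map π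
      h := candidate_algebra_compat adj A Z π hcond }
  obtain ⟨f, hf⟩ := (Monad.comparison adj).map_surjective φ
  have hRf : R.map f = adj.unit.app (R.obj A) ≫ R.map π :=
    congrArg Monad.Algebra.Hom.f hf
  refine ⟨f, ?_⟩
  have h1 : L.map (R.map π) ≫ adj.counit.app Z = adj.counit.app (L.obj (R.obj A)) ≫ π :=
    adj.counit_naturality π
  calc adj.counit.app A ≫ f
      = L.map (R.map f) ≫ adj.counit.app Z := (adj.counit_naturality f).symm
    _ = L.map (adj.unit.app (R.obj A) ≫ R.map π) ≫ adj.counit.app Z := by rw [hRf]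
    _ = L.map (adj.unit.app (R.obj A)) ≫ L.map (R.map π) ≫ adj.counit.app Z := by
        rw [L.map_comp, Category.assoc]
    _ = L.map (adj.unit.app (R.obj A)) ≫ adj.counit.app (L.obj (R.obj A)) ≫ π := by rw [h1]
    _ = (L.map (adj.unit.app (R.obj A)) ≫ adj.counit.app (L.obj (R.obj A))) ≫ π :=
        (Category.assoc _ _ _).symm
    _ = 𝟙 (L.obj (R.obj A)) ≫ π :=
        congrArg (fun t => t ≫ π) (adj.left_triangle_components (R.obj A))
    _ = π := Category.id_comp π

/-- If the comparison functor is full and faithful, each counit component is a regular epi: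
it is the coequalizer of the pair `(ε_{LRA}, LRε_A)`. -/
noncomputable def regularEpiCounitOfComparisonFullyFaithful
    [(Monad.comparison adj).Full] [(Monad.comparison adj).Faithful] (A : D) :
    RegularEpi (adj.counit.app A) where
  W := L.obj (R.obj (L.obj (R.obj A)))
  left := adj.counit.app (L.obj (R.obj A))
  right := L.map (R.map (adj.counit.app A))
  w := (adj.counit_naturality (adj.counit.app A)).symm
  isColimit := by
    have hepi : Epi (adj.counit.app A) := counit_epi_of_comparison_faithful adj A
    exact Cofork.IsColimit.mk _
      (fun s => (exists_fac_of_comparison_full adj A s.pt s.π s.condition).choose)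
      (fun s => (exists_fac_of_comparison_full adj A s.pt s.π s.condition).choose_spec)
      (fun s m hm => by
        apply (cancel_epi (adj.counit.app A)).mp
        have h1 : adj.counit.app A ≫ m = s.π := hm
        have h2 : adj.counit.app A
            ≫ (exists_fac_of_comparison_full adj A s.pt s.π s.condition).choose = s.π :=
          (exists_fac_of_comparison_full adj A s.pt s.π s.condition).choose_spec
        exact h1.trans h2.symm)

/-- If every counit component is a regular epi and `D` has kernel pairs,
then the comparison functor is full. -/
theorem comparison_full_of_counit_regularEpi [HasPullbacks D]
    (hre : ∀ A : D, Nonempty (RegularEpi (adj.counit.app A))) :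
    (Monad.comparison adj).Full := by
  have hepi : ∀ A : D, Epi (adj.counit.app A) := fun A =>
    RegularEpi.epi _ (hre A).some
  have hfaith : R.Faithful := faithful_of_counit_epi adj hepi
  constructor
  rintro A B ⟨h, hh⟩
  dsimp [Monad.comparison] at h hh
  change R.map (L.map h) ≫ R.map (adj.counit.app B) = R.map (adj.counit.app A) ≫ h at hh
  -- kernel pair of ε_A
  let u : pullback (adj.counit.app A) (adj.counit.app A) ⟶ L.obj (R.obj A) := pullback.fst _ _
  let v : pullback (adj.counit.app A) (adj.counit.app A) ⟶ L.obj (R.obj A) := pullback.snd _ _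
  have hkp : u ≫ adj.counit.app A = v ≫ adj.counit.app A := pullback.condition
  have huv : u ≫ (L.map h ≫ adj.counit.app B) = v ≫ (L.map h ≫ adj.counit.app B) := by
    apply hfaith.map_injective
    rw [R.map_comp, R.map_comp, R.map_comp, R.map_comp, hh, ← Category.assoc,
      ← Category.assoc, ← R.map_comp, ← R.map_comp, hkp]
  -- ε_A is the coequalizer of its kernel pair
  letI := (hre A).some
  have hkpair : IsKernelPair (adj.counit.app A) u v :=
    IsPullback.of_hasPullback (adj.counit.app A) (adj.counit.app A)
  have hcolim : IsColimit (Cofork.ofπ (adj.counit.app A) hkp) := hkpair.toCoequalizer (hre A).some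
  obtain ⟨f, hf⟩ := Cofork.IsColimit.desc' hcolim (L.map h ≫ adj.counit.app B) huv
  have hf' : adj.counit.app A ≫ f = L.map h ≫ adj.counit.app B := hf
  refine ⟨f, ?_⟩
  apply Monad.Algebra.Hom.ext
  show R.map f = h
  have hRg : R.map (adj.counit.app A) ≫ R.map f = R.map (adj.counit.app A) ≫ h := by
    rw [← R.map_comp, hf', R.map_comp, hh]
  have h2 := congrArg (fun t => adj.unit.app (R.obj A) ≫ t) hRg
  simpa [adj.right_triangle_components_assoc] using h2

/-- General form: the comparison functor of an adjunction is fully faithful iff every counit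
component is a regular epimorphism, provided the codomain category has pullbacks. -/
theorem comparison_full_faithful_iff [HasPullbacks D] :
    ((Monad.comparison adj).Full ∧ (Monad.comparison adj).Faithful) ↔
      ∀ A : D, Nonempty (RegularEpi (adj.counit.app A)) := by
  constructor
  · rintro ⟨hfull, hfaith⟩ A
    exact ⟨regularEpiCounitOfComparisonFullyFaithful adj A⟩
  · intro hre
    have hepi : ∀ A : D, Epi (adj.counit.app A) := fun A =>
      RegularEpi.epi _ (hre A).some
    have := faithful_of_counit_epi adj hepi
    exact ⟨comparison_full_of_counit_regularEpi adj hre, inferInstance⟩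

end General

/-- For `p : x ⟶ y` in a category with finite limits, the Eilenberg–Moore comparison functor
`K^p : B↓y ⥤ Desc(p)` of the adjunction `p_! ⊣ p^*` is fully faithful iff every counit
component `ε_f : p_!(p^* f) ⟶ f` is a regular epimorphism in the slice category `B↓y`. -/
theorem comparison_fullyFaithful_iff_counit_regularEpi
    {B : Type*} [Category B] [HasFiniteLimits B] {x y : B} (p : x ⟶ y) :
    ((Monad.comparison (Over.mapPullbackAdj p)).Full ∧
      (Monad.comparison (Over.mapPullbackAdj p)).Faithful) ↔
      ∀ f : Over y, Nonempty (RegularEpi ((Over.mapPullbackAdj p).counit.app f)) := by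
  exact comparison_full_faithful_iff (Over.mapPullbackAdj p)
end

section
/- Let B be a category with chosen pullbacks and p : x ⟶ y a morphism. Suppose that for every algebra (a, γ) for the monad p^* p_! on B↓x (so a : v → x is an object of B↓x and γ : p^*(p_! a) ⟶ a is the algebra structure satisfying the unit and multiplication laws), there exists a morphism f : w ⟶ y in B such that p^* f = a and, regarding γ as a morphism p_!(p^*(p_! a)) ⟶ p_! a in B↓y, one has ε_f ∘ γ = ε_f ∘ ε_{p_! a} (where ε is the counit of p_! ⊣ p^* and p_!(p^* f) = p_! a). Then the Eilenberg–Moore comparison functor K^p : B↓y → Desc(p) is essentially surjective. -/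
open CategoryTheory CategoryTheory.Limits

/-- Let `B` be a category with pullbacks and `p : x ⟶ y`.  If for every algebra `(a, γ)` for
the monad `p^* p_!` on `B↓x` there is `f : w ⟶ y` with `p^* f = a` and
`ε_f ∘ p_!(γ) = ε_f ∘ ε_{p_! a}`, then the Eilenberg–Moore comparison functor
`K^p : B↓y ⥤ Desc(p)` is essentially surjective. -/
theorem comparison_essSurj_of_descent_data_effective
    {B : Type*} [Category B] [HasPullbacks B] {x y : B} (p : x ⟶ y)
    (H : ∀ A : (Over.mapPullbackAdj p).toMonad.Algebra,
      ∃ (f : Over y) (h : (Over.pullback p).obj f = A.A),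
        (Over.map p).map A.a ≫ eqToHom (congrArg (Over.map p).obj h.symm) ≫
            (Over.mapPullbackAdj p).counit.app f =
          (Over.mapPullbackAdj p).counit.app ((Over.map p).obj A.A) ≫
            eqToHom (congrArg (Over.map p).obj h.symm) ≫
            (Over.mapPullbackAdj p).counit.app f) :
    (Monad.comparison (Over.mapPullbackAdj p)).EssSurj := by
  set adj := Over.mapPullbackAdj p with hadj
  constructor
  intro A
  obtain ⟨Aobj, a, unit, assoc⟩ := A
  obtain ⟨f, h, hc⟩ := H ⟨Aobj, a, unit, assoc⟩
  dsimp at h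
  subst h
  refine ⟨f, ⟨Monad.Algebra.isoMk (Iso.refl _) ?_⟩⟩
  simp only [Iso.refl_hom, Category.comp_id, Functor.map_id, Category.id_comp]
  -- goal: a = R.map (adj.counit.app f)
  apply (adj.homEquiv _ f).symm.injective
  simp only [Adjunction.homEquiv_counit]
  have e2 : (Over.map p).map ((Over.pullback p).map (adj.counit.app f))
        ≫ adj.counit.app f = adj.counit.app _ ≫ adj.counit.app f :=
    adj.counit.naturality _
  erw [CategoryTheory.Functor.map_id, Category.id_comp, Category.comp_id, e2]
  simp only [eqToHom_refl, Category.id_comp] at hc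
  exact hc
end

section
/- Let C and D be categories with pullbacks and U : C ⥤ D a fully faithful functor preserving pullbacks. Suppose that for every object x of C and every effective descent morphism g : U(x) ⟶ z in D, the object z is isomorphic to U(y) for some object y of C. Then U reflects effective descent morphisms: every morphism p in C such that U(p) is an effective descent morphism in D is itself an effective descent morphism in C. -/
open CategoryTheory CategoryTheory.Limits CategoryTheory.Category

/-- A morphism `p` in a category with pullbacks is an effective descent morphism if the
Eilenberg–Moore comparison functor of the adjunction `p_! ⊣ p^*` is an equivalence. -/
def IsEffectiveDescentMorphism {B : Type*} [Category B] [HasPullbacks B]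
    {x y : B} (p : x ⟶ y) : Prop :=
  (Monad.comparison (Over.mapPullbackAdj p)).IsEquivalence

namespace EffDescentAux

universe v₁ v₂ v₃ v₄ u₁ u₂ u₃ u₄

variable {A : Type u₁} {B : Type u₂} {A' : Type u₃} {B' : Type u₄}
  [Category.{v₁} A] [Category.{v₂} B] [Category.{v₃} A'] [Category.{v₄} B']
  {L : B ⥤ A} {R : A ⥤ B} (adj : L ⊣ R)
  {L' : B' ⥤ A'} {R' : A' ⥤ B'} (adj' : L' ⊣ R')
  (V : A ⥤ A') (W : B ⥤ B')
  (α : W ⋙ L' ≅ L ⋙ V) (β : R ⋙ W ≅ V ⋙ R')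

/-- The comparison `T'.obj (W.obj X) ⟶ W.obj (T.obj X)` between the two monads. -/
def kap (X : B) : adj'.toMonad.obj (W.obj X) ⟶ W.obj (adj.toMonad.obj X) :=
  R'.map (α.hom.app X) ≫ β.inv.app (L.obj X)

instance kap_isIso (X : B) : IsIso (kap adj adj' V W α β X) := by
  unfold kap; exact IsIso.comp_isIso' (Functor.map_isIso R' (α.hom.app X)) (Iso.isIso_inv (β.app (L.obj X)))

lemma kap_natural {X Y : B} (f : X ⟶ Y) :
    adj'.toMonad.map (W.map f) ≫ kap adj adj' V W α β Y =
      kap adj adj' V W α β X ≫ W.map (adj.toMonad.map f) := by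
  have hα : L'.map (W.map f) ≫ α.hom.app Y = α.hom.app X ≫ V.map (L.map f) :=
    α.hom.naturality f
  have hβ : R'.map (V.map (L.map f)) ≫ β.inv.app (L.obj Y) =
      β.inv.app (L.obj X) ≫ W.map (R.map (L.map f)) := β.inv.naturality (L.map f)
  show R'.map (L'.map (W.map f)) ≫ R'.map (α.hom.app Y) ≫ β.inv.app (L.obj Y) =
      (R'.map (α.hom.app X) ≫ β.inv.app (L.obj X)) ≫ W.map (R.map (L.map f))
  rw [← assoc, ← R'.map_comp, hα, R'.map_comp, assoc, hβ, assoc]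

variable (hu : ∀ X : B, adj'.unit.app (W.obj X) ≫ R'.map (α.hom.app X) =
    W.map (adj.unit.app X) ≫ β.hom.app (L.obj X))
  (hc : ∀ a : A, α.hom.app (R.obj a) ≫ V.map (adj.counit.app a) =
    L'.map (β.hom.app a) ≫ adj'.counit.app (V.obj a))

include hu in
lemma kap_unit (X : B) :
    adj'.toMonad.η.app (W.obj X) ≫ kap adj adj' V W α β X = W.map (adj.toMonad.η.app X) := by
  show adj'.unit.app (W.obj X) ≫ R'.map (α.hom.app X) ≫ β.inv.app (L.obj X) =
      W.map (adj.unit.app X)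
  rw [← assoc, hu X, assoc]
  simp

include hc in
lemma kap_mul (X : B) :
    adj'.toMonad.μ.app (W.obj X) ≫ kap adj adj' V W α β X =
      adj'.toMonad.map (kap adj adj' V W α β X) ≫ kap adj adj' V W α β (adj.toMonad.obj X) ≫
        W.map (adj.toMonad.μ.app X) := by
  have hβ : R'.map (V.map (adj.counit.app (L.obj X))) ≫ β.inv.app (L.obj X)
      = β.inv.app (L.obj (R.obj (L.obj X))) ≫ W.map (R.map (adj.counit.app (L.obj X))) :=
    β.inv.naturality (adj.counit.app (L.obj X))
  have key : L'.map (β.inv.app (L.obj X)) ≫ α.hom.app (R.obj (L.obj X)) ≫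
      V.map (adj.counit.app (L.obj X)) = adj'.counit.app (V.obj (L.obj X)) := by
    rw [hc (L.obj X), ← assoc, ← L'.map_comp, Iso.inv_hom_id_app, L'.map_id, id_comp]
  have hnat : L'.map (R'.map (α.hom.app X)) ≫ adj'.counit.app (V.obj (L.obj X))
      = adj'.counit.app (L'.obj (W.obj X)) ≫ α.hom.app X := adj'.counit.naturality (α.hom.app X)
  show R'.map (adj'.counit.app (L'.obj (W.obj X))) ≫
        R'.map (α.hom.app X) ≫ β.inv.app (L.obj X) =
      R'.map (L'.map (R'.map (α.hom.app X) ≫ β.inv.app (L.obj X))) ≫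
        (R'.map (α.hom.app (R.obj (L.obj X))) ≫ β.inv.app (L.obj (R.obj (L.obj X)))) ≫
        W.map (R.map (adj.counit.app (L.obj X)))
  calc R'.map (adj'.counit.app (L'.obj (W.obj X))) ≫
          R'.map (α.hom.app X) ≫ β.inv.app (L.obj X)
      = R'.map (L'.map (R'.map (α.hom.app X)) ≫ adj'.counit.app (V.obj (L.obj X))) ≫
          β.inv.app (L.obj X) := by
        rw [hnat, R'.map_comp, assoc]
    _ = R'.map (L'.map (R'.map (α.hom.app X)) ≫ L'.map (β.inv.app (L.obj X)) ≫
          α.hom.app (R.obj (L.obj X)) ≫ V.map (adj.counit.app (L.obj X))) ≫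
          β.inv.app (L.obj X) := by rw [key]
    _ = R'.map (L'.map (R'.map (α.hom.app X) ≫ β.inv.app (L.obj X))) ≫
          R'.map (α.hom.app (R.obj (L.obj X))) ≫
          R'.map (V.map (adj.counit.app (L.obj X))) ≫ β.inv.app (L.obj X) := by
        rw [L'.map_comp]
        simp only [Functor.map_comp, assoc]
    _ = R'.map (L'.map (R'.map (α.hom.app X) ≫ β.inv.app (L.obj X))) ≫
          (R'.map (α.hom.app (R.obj (L.obj X))) ≫ β.inv.app (L.obj (R.obj (L.obj X)))) ≫
          W.map (R.map (adj.counit.app (L.obj X))) := by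
        rw [hβ]
        simp only [assoc]

include hu hc in
/-- The induced functor between Eilenberg–Moore categories. -/
@[simps]
def algMap : adj.toMonad.Algebra ⥤ adj'.toMonad.Algebra where
  obj S :=
    { A := W.obj S.A
      a := kap adj adj' V W α β S.A ≫ W.map S.a
      unit := by
        rw [← assoc, kap_unit adj adj' V W α β hu, ← W.map_comp, Monad.Algebra.unit]
        simp
      assoc := by
        rw [Functor.map_comp, assoc, ← assoc (adj'.toMonad.map (W.map S.a)),
          kap_natural adj adj' V W α β S.a, assoc, ← W.map_comp, ← Monad.Algebra.assoc,
          W.map_comp, reassoc_of% (kap_mul adj adj' V W α β hc S.A)] }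
  map {S S'} f :=
    { f := W.map f.f
      h := by
        dsimp only
        rw [← assoc, kap_natural adj adj' V W α β f.f, assoc, ← W.map_comp, f.h, W.map_comp]
        simp only [assoc] }

instance algMap_faithful [W.Faithful] : (algMap adj adj' V W α β hu hc).Faithful where
  map_injective {S S'} f g h := by
    ext
    apply W.map_injective
    exact congrArg Monad.Algebra.Hom.f h

instance algMap_full [W.Full] [W.Faithful] : (algMap adj adj' V W α β hu hc).Full where
  map_surjective {S S'} m := by
    obtain ⟨g, hg⟩ := W.map_surjective m.f
    refine ⟨⟨g, ?_⟩, ?_⟩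
    · apply W.map_injective
      have hm : adj'.toMonad.map (W.map g) ≫ kap adj adj' V W α β S'.A ≫ W.map S'.a =
          (kap adj adj' V W α β S.A ≫ W.map S.a) ≫ W.map g := by
        have h0 := m.h
        rw [← hg] at h0
        exact h0
      rw [← assoc, kap_natural adj adj' V W α β g, assoc, ← W.map_comp, assoc,
        ← W.map_comp] at hm
      exact (cancel_epi (kap adj adj' V W α β S.A)).1 hm
    · ext
      exact hg

include hu hc in
/-- The comparison functors commute with `algMap` up to isomorphism. -/
def comparisonSquare :
    V ⋙ Monad.comparison adj' ≅ Monad.comparison adj ⋙ algMap adj adj' V W α β hu hc := by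
  refine NatIso.ofComponents (fun a => Monad.Algebra.isoMk ((β.app a).symm) ?_) ?_
  · show adj'.toMonad.map (β.inv.app a) ≫
        (kap adj adj' V W α β (R.obj a) ≫ W.map (R.map (adj.counit.app a))) =
      R'.map (adj'.counit.app (V.obj a)) ≫ β.inv.app a
    have hβ : R'.map (V.map (adj.counit.app a)) ≫ β.inv.app a
        = β.inv.app (L.obj (R.obj a)) ≫ W.map (R.map (adj.counit.app a)) :=
      β.inv.naturality (adj.counit.app a)
    have key : L'.map (β.inv.app a) ≫ α.hom.app (R.obj a) ≫ V.map (adj.counit.app a)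
        = adj'.counit.app (V.obj a) := by
      rw [hc a, ← assoc, ← L'.map_comp, Iso.inv_hom_id_app, L'.map_id, id_comp]
    show R'.map (L'.map (β.inv.app a)) ≫
        (R'.map (α.hom.app (R.obj a)) ≫ β.inv.app (L.obj (R.obj a))) ≫
          W.map (R.map (adj.counit.app a)) =
      R'.map (adj'.counit.app (V.obj a)) ≫ β.inv.app a
    rw [assoc, ← hβ, ← assoc, ← assoc, ← R'.map_comp, ← R'.map_comp, assoc, key]
  · intro a b f
    ext
    exact β.inv.naturality f

include α β hu hc in
theorem comparison_isEquivalence_of_comparison_isEquivalence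
    [V.Full] [V.Faithful] [W.Full] [W.Faithful]
    [(Monad.comparison adj').IsEquivalence]
    (himg : ∀ a' : A', W.essImage (R'.obj a') → V.essImage a') :
    (Monad.comparison adj).IsEquivalence := by
  haveI : (V ⋙ Monad.comparison adj').Full := Functor.Full.comp _ _
  haveI : (V ⋙ Monad.comparison adj').Faithful := Functor.Faithful.comp _ _
  haveI hMfull : (Monad.comparison adj ⋙ algMap adj adj' V W α β hu hc).Full :=
    Functor.Full.of_iso (comparisonSquare adj adj' V W α β hu hc)
  haveI : (Monad.comparison adj ⋙ algMap adj adj' V W α β hu hc).Faithful :=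
    Functor.Faithful.of_iso (comparisonSquare adj adj' V W α β hu hc)
  haveI : (Monad.comparison adj).Faithful :=
    Functor.Faithful.of_comp (Monad.comparison adj) (algMap adj adj' V W α β hu hc)
  haveI : (Monad.comparison adj).Full :=
    Functor.Full.of_comp_faithful (Monad.comparison adj) (algMap adj adj' V W α β hu hc)
  haveI : (Monad.comparison adj).EssSurj := by
    constructor
    intro S
    set M := algMap adj adj' V W α β hu hc with hM
    let a' := (Monad.comparison adj').objPreimage (M.obj S)
    let i : (Monad.comparison adj').obj a' ≅ M.obj S :=
      (Monad.comparison adj').objObjPreimageIso (M.obj S)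
    have hWim : W.essImage (R'.obj a') :=
      ⟨S.A, ⟨(adj'.toMonad.forget.mapIso i).symm⟩⟩
    obtain ⟨a, ⟨j⟩⟩ := himg a' hWim
    have big : M.obj ((Monad.comparison adj).obj a) ≅ M.obj S :=
      ((comparisonSquare adj adj' V W α β hu hc).app a).symm ≪≫
        (Monad.comparison adj').mapIso j ≪≫ i
    exact ⟨a, ⟨M.preimageIso big⟩⟩
  exact { }



variable {A : Type u₁} {B : Type u₂} [Category.{v₁} A] [Category.{v₂} B]
  {L : B ⥤ A} {R : A ⥤ B} (adj : L ⊣ R) (a : A)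

/-- The left adjoint of the sliced adjunction. -/
@[simps]
def sliceLeft : Over (R.obj a) ⥤ Over a where
  obj h := Over.mk (L.map h.hom ≫ adj.counit.app a)
  map {h h'} m := Over.homMk (L.map m.left) (by
    dsimp
    rw [← assoc, ← L.map_comp, Over.w m])

/-- The sliced adjunction. -/
@[simps! unit_app counit_app]
def sliceAdj : sliceLeft adj a ⊣ Over.post R (X := a) :=
  Adjunction.mkOfUnitCounit
    { unit :=
      { app := fun h => Over.homMk (adj.unit.app h.left) (by
          show adj.unit.app h.left ≫ R.map (L.map h.hom ≫ adj.counit.app a) = h.hom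
          have h1 : adj.unit.app h.left ≫ R.map (L.map h.hom) =
              h.hom ≫ adj.unit.app (R.obj a) := (adj.unit.naturality h.hom).symm
          rw [Functor.map_comp, ← assoc, h1, assoc, Adjunction.right_triangle_components]
          simp)
        naturality := fun h h' m => by
          apply Over.OverMorphism.ext
          exact adj.unit.naturality m.left }
      counit :=
      { app := fun k => Over.homMk (adj.counit.app k.left)
          (by exact (adj.counit.naturality k.hom).symm)
        naturality := fun k k' m => by
          apply Over.OverMorphism.ext
          exact adj.counit.naturality m.left }
      left_triangle := by
        ext h
        show L.map (adj.unit.app h.left) ≫ 𝟙 _ ≫ adj.counit.app (L.obj h.left) = 𝟙 _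
        rw [id_comp]
        exact adj.left_triangle_components h.left
      right_triangle := by
        ext k
        show adj.unit.app (R.obj k.left) ≫ (𝟙 _ ≫ R.map (adj.counit.app k.left)) = 𝟙 _
        rw [id_comp]
        exact adj.right_triangle_components k.left }

/-- Slices of the Eilenberg–Moore category are algebras for the sliced monad. -/
@[simps]
def slicePsi : Over ((Monad.comparison adj).obj a) ⥤ (sliceAdj adj a).toMonad.Algebra where
  obj m :=
    { A := Over.mk m.hom.f
      a := Over.homMk m.left.a (by
        have h0 : adj.toMonad.map m.hom.f ≫ R.map (adj.counit.app a) =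
            m.left.a ≫ m.hom.f := m.hom.h
        show m.left.a ≫ m.hom.f = R.map (L.map m.hom.f ≫ adj.counit.app a)
        rw [← h0]
        exact (R.map_comp _ _).symm)
      unit := by
        apply Over.OverMorphism.ext
        exact m.left.unit
      assoc := by
        apply Over.OverMorphism.ext
        exact m.left.assoc }
  map {m m'} n :=
    { f := Over.homMk n.left.f (by
        have h0 : n.left.f ≫ m'.hom.f = m.hom.f :=
          congrArg Monad.Algebra.Hom.f (Over.w n)
        dsimp
        rw [← h0]
        rfl)
      h := by
        apply Over.OverMorphism.ext
        exact n.left.h }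

instance slicePsi_faithful : (slicePsi adj a).Faithful where
  map_injective {m m'} f g h := by
    have h1 : f.left.f = g.left.f :=
      congrArg (fun (q : (slicePsi adj a).obj m ⟶ (slicePsi adj a).obj m') => q.f.left) h
    apply Over.OverMorphism.ext
    apply Monad.Algebra.Hom.ext
    exact h1

instance slicePsi_full : (slicePsi adj a).Full where
  map_surjective {m m'} g := by
    refine ⟨Over.homMk ⟨g.f.left, ?_⟩ ?_, ?_⟩
    · have h0 : adj.toMonad.map g.f.left ≫ m'.left.a = m.left.a ≫ g.f.left :=
        congrArg CommaMorphism.left g.h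
      exact h0
    · apply Monad.Algebra.Hom.ext
      have h2 : g.f.left ≫ m'.hom.f = m.hom.f := Over.w g.f
      exact h2
    · apply Monad.Algebra.Hom.ext
      rfl

instance slicePsi_essSurj : (slicePsi adj a).EssSurj where
  mem_essImage S := by
    have hu : adj.toMonad.η.app S.A.left ≫ S.a.left = 𝟙 S.A.left :=
      congrArg CommaMorphism.left S.unit
    have ha : adj.toMonad.μ.app S.A.left ≫ S.a.left =
        adj.toMonad.map S.a.left ≫ S.a.left :=
      congrArg CommaMorphism.left S.assoc
    let Balg : adj.toMonad.Algebra := { A := S.A.left, a := S.a.left, unit := hu, assoc := ha }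
    have hcond : adj.toMonad.map S.A.hom ≫ ((Monad.comparison adj).obj a).a =
        S.a.left ≫ S.A.hom := by
      have h0 : S.a.left ≫ S.A.hom = R.map (L.map S.A.hom ≫ adj.counit.app a) := Over.w S.a
      rw [Functor.map_comp] at h0
      exact h0.symm
    let mhom : Balg ⟶ (Monad.comparison adj).obj a := { f := S.A.hom, h := hcond }
    refine ⟨Over.mk mhom, ⟨Monad.Algebra.isoMk (Over.isoMk (Iso.refl _) ?_) ?_⟩⟩
    · exact id_comp _
    · apply Over.OverMorphism.ext
      show R.map (L.map (𝟙 S.A.left)) ≫ S.a.left = S.a.left ≫ 𝟙 S.A.left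
      simp
      exact id_comp _

instance slicePsi_isEquivalence : (slicePsi adj a).IsEquivalence := { }

/-- The comparison functor of the sliced adjunction factors through `slicePsi`. -/
def sliceComparisonIso :
    Monad.comparison (sliceAdj adj a) ≅
      Over.post (Monad.comparison adj) ⋙ slicePsi adj a := by
  refine NatIso.ofComponents
    (fun k => Monad.Algebra.isoMk (Over.isoMk (Iso.refl _) ?_) ?_) ?_
  · exact id_comp _
  · apply Over.OverMorphism.ext
    show R.map (L.map (𝟙 (R.obj k.left))) ≫ R.map (adj.counit.app k.left) =
      R.map (adj.counit.app k.left) ≫ 𝟙 _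
    simp
  · intro k k' m
    apply Monad.Algebra.Hom.ext
    apply Over.OverMorphism.ext
    show R.map m.left ≫ 𝟙 _ = 𝟙 _ ≫ R.map m.left
    simp

/-- Monadicity is preserved by slicing. -/
theorem sliceAdj_comparison_isEquivalence [(Monad.comparison adj).IsEquivalence] :
    (Monad.comparison (sliceAdj adj a)).IsEquivalence := by
  haveI : (Over.post (Monad.comparison adj) (X := a)).IsEquivalence := inferInstance
  exact Functor.isEquivalence_of_iso (sliceComparisonIso adj a).symm



section Stability

variable {D : Type u₁} [Category.{v₁} D] [HasPullbacks D]

/-- An isomorphism of objects induces an equivalence of over categories. -/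
@[simps]
noncomputable def mapIsoEquiv {X Y : D} (psi : X ≅ Y) : Over X ≌ Over Y where
  functor := Over.map psi.hom
  inverse := Over.map psi.inv
  unitIso := eqToIso (by rw [← Over.mapComp_eq, Iso.hom_inv_id, Over.mapId_eq])
  counitIso := eqToIso (by rw [← Over.mapComp_eq, Iso.inv_hom_id, Over.mapId_eq])
  functor_unitIso_comp := by
    intro X
    simp [eqToIso, eqToHom_app, eqToHom_map]

/-- Changing one leg of a pullback by precomposition with an isomorphism. -/
@[simps]
noncomputable def pbIsoLeft {x z y c : D} (m : x ⟶ z) (psi : c ≅ y) (n : y ⟶ z) :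
    pullback m (psi.hom ≫ n) ≅ pullback m n where
  hom := pullback.map _ _ _ _ (𝟙 _) psi.hom (𝟙 _) (by simp) (by simp)
  inv := pullback.map _ _ _ _ (𝟙 _) psi.inv (𝟙 _) (by simp) (by simp)
  hom_inv_id := by ext <;> simp [pullback.lift_fst, pullback.lift_snd, pullback.lift_fst_assoc, pullback.lift_snd_assoc]
  inv_hom_id := by ext <;> simp [pullback.lift_fst, pullback.lift_snd, pullback.lift_fst_assoc, pullback.lift_snd_assoc]

variable {e b c : D} (p : e ⟶ b) (fob : Over b) (psi : c ≅ pullback fob.hom p)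

/-- The comparison functor `Over c ⥤ Over ((Over.pullback p).obj fob)`. -/
noncomputable def stabW : Over c ⥤ Over ((Over.pullback p).obj fob) :=
  Over.map psi.hom ⋙ Over.iteratedSliceBackward ((Over.pullback p).obj fob)

/-- The left-adjoint square for pullback stability. -/
noncomputable def stabAlpha :
    stabW p fob psi ⋙ sliceLeft (Over.mapPullbackAdj p) fob ≅
      Over.map (psi.hom ≫ pullback.fst fob.hom p) ⋙ Over.iteratedSliceBackward fob :=
  NatIso.ofComponents (fun h =>
    Over.isoMk (Over.isoMk (Iso.refl _) (by
      dsimp [stabW, sliceLeft]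
      show 𝟙 h.left ≫ (h.hom ≫ psi.hom ≫ pullback.fst fob.hom p) ≫ fob.hom =
        ((h.hom ≫ psi.hom) ≫ pullback.snd fob.hom p) ≫ p
      simp [pullback.condition])) (by
      apply Over.OverMorphism.ext
      dsimp [stabW, sliceLeft]
      show 𝟙 h.left ≫ h.hom ≫ psi.hom ≫ pullback.fst fob.hom p =
        (h.hom ≫ psi.hom) ≫ ((Over.mapPullbackAdj p).counit.app fob).left
      simp [pullback.condition])) (by
    intro h h' m
    apply Over.OverMorphism.ext
    apply Over.OverMorphism.ext
    dsimp [stabW, sliceLeft]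
    show m.left ≫ 𝟙 h'.left = 𝟙 h.left ≫ m.left
    simp)

/-- The right-adjoint square for pullback stability. -/
noncomputable def stabBeta :
    Over.pullback (psi.hom ≫ pullback.fst fob.hom p) ⋙ stabW p fob psi ≅
      Over.iteratedSliceBackward fob ⋙ Over.post (Over.pullback p) :=
  NatIso.ofComponents (fun k =>
    Over.isoMk (Over.isoMk
      (pbIsoLeft k.hom psi (pullback.fst fob.hom p) ≪≫
        pullbackRightPullbackFstIso fob.hom p k.hom) (by
      dsimp [stabW]
      show (pbIsoLeft k.hom psi (pullback.fst fob.hom p) ≪≫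
          pullbackRightPullbackFstIso fob.hom p k.hom).hom ≫ pullback.snd (k.hom ≫ fob.hom) p =
        (pullback.snd k.hom (psi.hom ≫ pullback.fst fob.hom p) ≫ psi.hom) ≫ pullback.snd fob.hom p
      simp [pullback.condition, pullback.lift_fst, pullback.lift_snd, pullback.lift_fst_assoc, pullback.lift_snd_assoc])) (by
      apply Over.OverMorphism.ext
      dsimp [stabW]
      apply pullback.hom_ext
      · show ((pbIsoLeft k.hom psi (pullback.fst fob.hom p) ≪≫
            pullbackRightPullbackFstIso fob.hom p k.hom).hom ≫
            @pullback.lift _ _ (pullback (k.hom ≫ fob.hom) p) (fob.left) (e) (b) (fob.hom) (p) inferInstance (pullback.fst (k.hom ≫ fob.hom) p ≫ k.hom)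
              (pullback.snd (k.hom ≫ fob.hom) p) (by rw [assoc]; exact pullback.condition)) ≫
            pullback.fst fob.hom p =
          (pullback.snd k.hom (psi.hom ≫ pullback.fst fob.hom p) ≫ psi.hom) ≫ pullback.fst fob.hom p
        simp [pullback.condition, pullback.lift_fst, pullback.lift_snd, pullback.lift_fst_assoc, pullback.lift_snd_assoc]
      · show ((pbIsoLeft k.hom psi (pullback.fst fob.hom p) ≪≫
            pullbackRightPullbackFstIso fob.hom p k.hom).hom ≫
            @pullback.lift _ _ (pullback (k.hom ≫ fob.hom) p) (fob.left) (e) (b) (fob.hom) (p) inferInstance (pullback.fst (k.hom ≫ fob.hom) p ≫ k.hom)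
              (pullback.snd (k.hom ≫ fob.hom) p) (by rw [assoc]; exact pullback.condition)) ≫
            pullback.snd fob.hom p =
          (pullback.snd k.hom (psi.hom ≫ pullback.fst fob.hom p) ≫ psi.hom) ≫ pullback.snd fob.hom p
        simp [pullback.lift_fst, pullback.lift_snd, pullback.lift_fst_assoc, pullback.lift_snd_assoc])) (by
    intro k k' m
    apply Over.OverMorphism.ext
    apply Over.OverMorphism.ext
    dsimp [stabW]
    apply pullback.hom_ext
    · show (@pullback.lift _ _ (pullback k.hom (psi.hom ≫ pullback.fst fob.hom p)) (k'.left) (c) (fob.left) (k'.hom) (psi.hom ≫ pullback.fst fob.hom p) inferInstance (pullback.fst k.hom (psi.hom ≫ pullback.fst fob.hom p) ≫ m.left)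
          (pullback.snd k.hom (psi.hom ≫ pullback.fst fob.hom p)) (by rw [assoc, Over.w m]; exact pullback.condition) ≫
          (pbIsoLeft k'.hom psi (pullback.fst fob.hom p) ≪≫
            pullbackRightPullbackFstIso fob.hom p k'.hom).hom) ≫ pullback.fst (k'.hom ≫ fob.hom) p =
        ((pbIsoLeft k.hom psi (pullback.fst fob.hom p) ≪≫
            pullbackRightPullbackFstIso fob.hom p k.hom).hom ≫
          @pullback.lift _ _ (pullback (k.hom ≫ fob.hom) p) (k'.left) (e) (b) (k'.hom ≫ fob.hom) (p) inferInstance (pullback.fst (k.hom ≫ fob.hom) p ≫ m.left)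
            (pullback.snd (k.hom ≫ fob.hom) p) (by rw [assoc, Over.w_assoc m]; exact pullback.condition)) ≫
          pullback.fst (k'.hom ≫ fob.hom) p
      simp [pullback.lift_fst, pullback.lift_snd, pullback.lift_fst_assoc, pullback.lift_snd_assoc]
    · show (@pullback.lift _ _ (pullback k.hom (psi.hom ≫ pullback.fst fob.hom p)) (k'.left) (c) (fob.left) (k'.hom) (psi.hom ≫ pullback.fst fob.hom p) inferInstance (pullback.fst k.hom (psi.hom ≫ pullback.fst fob.hom p) ≫ m.left)
          (pullback.snd k.hom (psi.hom ≫ pullback.fst fob.hom p)) (by rw [assoc, Over.w m]; exact pullback.condition) ≫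
          (pbIsoLeft k'.hom psi (pullback.fst fob.hom p) ≪≫
            pullbackRightPullbackFstIso fob.hom p k'.hom).hom) ≫ pullback.snd (k'.hom ≫ fob.hom) p =
        ((pbIsoLeft k.hom psi (pullback.fst fob.hom p) ≪≫
            pullbackRightPullbackFstIso fob.hom p k.hom).hom ≫
          @pullback.lift _ _ (pullback (k.hom ≫ fob.hom) p) (k'.left) (e) (b) (k'.hom ≫ fob.hom) (p) inferInstance (pullback.fst (k.hom ≫ fob.hom) p ≫ m.left)
            (pullback.snd (k.hom ≫ fob.hom) p) (by rw [assoc, Over.w_assoc m]; exact pullback.condition)) ≫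
          pullback.snd (k'.hom ≫ fob.hom) p
      simp [pullback.lift_fst, pullback.lift_snd, pullback.lift_fst_assoc, pullback.lift_snd_assoc])

/-- Effective descent morphisms are stable under pullback (up to iso of the apex). -/
theorem stability [(Monad.comparison (Over.mapPullbackAdj p)).IsEquivalence] :
    (Monad.comparison (Over.mapPullbackAdj (psi.hom ≫ pullback.fst fob.hom p))).IsEquivalence := by
  haveI := sliceAdj_comparison_isEquivalence (Over.mapPullbackAdj p) fob
  haveI hV : (Over.iteratedSliceBackward fob).IsEquivalence :=
    (Over.iteratedSliceEquiv fob).symm.isEquivalence_functor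
  haveI hW1 : (Over.map psi.hom).IsEquivalence := (mapIsoEquiv psi).isEquivalence_functor
  haveI hW2 : (Over.iteratedSliceBackward ((Over.pullback p).obj fob)).IsEquivalence :=
    (Over.iteratedSliceEquiv ((Over.pullback p).obj fob)).symm.isEquivalence_functor
  haveI hW : (stabW p fob psi).IsEquivalence := Functor.isEquivalence_trans _ _
  refine comparison_isEquivalence_of_comparison_isEquivalence
    (Over.mapPullbackAdj (psi.hom ≫ pullback.fst fob.hom p))
    (sliceAdj (Over.mapPullbackAdj p) fob)
    (Over.iteratedSliceBackward fob) (stabW p fob psi)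
    (stabAlpha p fob psi) (stabBeta p fob psi) ?_ ?_ ?_
  · intro X
    apply Over.OverMorphism.ext
    apply Over.OverMorphism.ext
    dsimp [stabW, stabAlpha, stabBeta, sliceLeft]
    apply pullback.hom_ext
    · show (@pullback.lift _ _ (X.left) (X.left) (e) (b) (((X.hom ≫ psi.hom) ≫ pullback.snd fob.hom p) ≫ p) (p) inferInstance (𝟙 X.left) ((X.hom ≫ psi.hom) ≫ pullback.snd fob.hom p) (id_comp _) ≫
          @pullback.lift _ _ (pullback (((X.hom ≫ psi.hom) ≫ pullback.snd fob.hom p) ≫ p) p) (X.left) (e) (b) ((X.hom ≫ psi.hom ≫ pullback.fst fob.hom p) ≫ fob.hom) (p) inferInstance (pullback.fst (((X.hom ≫ psi.hom) ≫ pullback.snd fob.hom p) ≫ p) p ≫ 𝟙 X.left)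
            (pullback.snd (((X.hom ≫ psi.hom) ≫ pullback.snd fob.hom p) ≫ p) p) (by rw [comp_id, ← pullback.condition]; simp [pullback.condition])) ≫ pullback.fst ((X.hom ≫ psi.hom ≫ pullback.fst fob.hom p) ≫ fob.hom) p =
        (@pullback.lift _ _ (X.left) (X.left) (c) (fob.left) (X.hom ≫ psi.hom ≫ pullback.fst fob.hom p) (psi.hom ≫ pullback.fst fob.hom p) inferInstance (𝟙 X.left) X.hom (id_comp _) ≫
          (pbIsoLeft (X.hom ≫ psi.hom ≫ pullback.fst fob.hom p) psi (pullback.fst fob.hom p) ≪≫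
            pullbackRightPullbackFstIso fob.hom p (X.hom ≫ psi.hom ≫ pullback.fst fob.hom p)).hom) ≫
          pullback.fst ((X.hom ≫ psi.hom ≫ pullback.fst fob.hom p) ≫ fob.hom) p
      simp [pullback.lift_fst, pullback.lift_snd, pullback.lift_fst_assoc, pullback.lift_snd_assoc]
    · show (@pullback.lift _ _ (X.left) (X.left) (e) (b) (((X.hom ≫ psi.hom) ≫ pullback.snd fob.hom p) ≫ p) (p) inferInstance (𝟙 X.left) ((X.hom ≫ psi.hom) ≫ pullback.snd fob.hom p) (id_comp _) ≫
          @pullback.lift _ _ (pullback (((X.hom ≫ psi.hom) ≫ pullback.snd fob.hom p) ≫ p) p) (X.left) (e) (b) ((X.hom ≫ psi.hom ≫ pullback.fst fob.hom p) ≫ fob.hom) (p) inferInstance (pullback.fst (((X.hom ≫ psi.hom) ≫ pullback.snd fob.hom p) ≫ p) p ≫ 𝟙 X.left)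
            (pullback.snd (((X.hom ≫ psi.hom) ≫ pullback.snd fob.hom p) ≫ p) p) (by rw [comp_id, ← pullback.condition]; simp [pullback.condition])) ≫ pullback.snd ((X.hom ≫ psi.hom ≫ pullback.fst fob.hom p) ≫ fob.hom) p =
        (@pullback.lift _ _ (X.left) (X.left) (c) (fob.left) (X.hom ≫ psi.hom ≫ pullback.fst fob.hom p) (psi.hom ≫ pullback.fst fob.hom p) inferInstance (𝟙 X.left) X.hom (id_comp _) ≫
          (pbIsoLeft (X.hom ≫ psi.hom ≫ pullback.fst fob.hom p) psi (pullback.fst fob.hom p) ≪≫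
            pullbackRightPullbackFstIso fob.hom p (X.hom ≫ psi.hom ≫ pullback.fst fob.hom p)).hom) ≫
          pullback.snd ((X.hom ≫ psi.hom ≫ pullback.fst fob.hom p) ≫ fob.hom) p
      simp [pullback.lift_fst, pullback.lift_snd, pullback.lift_fst_assoc, pullback.lift_snd_assoc]
  · intro k
    apply Over.OverMorphism.ext
    apply Over.OverMorphism.ext
    dsimp [stabW, stabAlpha, stabBeta, sliceLeft]
    show 𝟙 (pullback k.hom (psi.hom ≫ pullback.fst fob.hom p)) ≫
        (𝟙 (pullback k.hom (psi.hom ≫ pullback.fst fob.hom p)) ≫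
          pullback.fst k.hom (psi.hom ≫ pullback.fst fob.hom p)) =
      (pbIsoLeft k.hom psi (pullback.fst fob.hom p) ≪≫ pullbackRightPullbackFstIso fob.hom p k.hom).hom ≫
        (𝟙 (pullback (k.hom ≫ fob.hom) p) ≫ pullback.fst (k.hom ≫ fob.hom) p)
    simp [pullback.lift_fst, pullback.lift_snd, pullback.lift_fst_assoc, pullback.lift_snd_assoc]
  · intro a' _
    exact Functor.EssSurj.mem_essImage _ a'

end Stability

section Main

variable {C : Type u₁} {D : Type u₂} [Category.{v₁} C] [Category.{v₂} D]
  [HasPullbacks C] [HasPullbacks D]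
  (U : C ⥤ D) [U.Full] [U.Faithful] [PreservesLimitsOfShape WalkingCospan U]

/-- The left-adjoint square for `Over.post U`. -/
noncomputable def postAlpha {e b : C} (p : e ⟶ b) :
    Over.post U (X := e) ⋙ Over.map (U.map p) ≅ Over.map p ⋙ Over.post U :=
  NatIso.ofComponents (fun h => Over.isoMk (Iso.refl _) (by
    show 𝟙 (U.obj h.left) ≫ U.map (h.hom ≫ p) = U.map h.hom ≫ U.map p
    simp)) (by
    intro h h' m
    apply Over.OverMorphism.ext
    show U.map m.left ≫ 𝟙 _ = 𝟙 _ ≫ U.map m.left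
    simp)

/-- The right-adjoint square for `Over.post U`. -/
noncomputable def postBeta {e b : C} (p : e ⟶ b) :
    Over.pullback p ⋙ Over.post U ≅ Over.post U ⋙ Over.pullback (U.map p) :=
  NatIso.ofComponents (fun k =>
    Over.isoMk (PreservesPullback.iso U k.hom p) (by
    show pullbackComparison U k.hom p ≫ pullback.snd (U.map k.hom) (U.map p) =
      U.map (pullback.snd k.hom p)
    exact pullbackComparison_comp_snd _ _ _)) (by
    intro k k' m
    apply Over.OverMorphism.ext
    dsimp
    apply pullback.hom_ext
    · show (U.map (@pullback.lift _ _ (pullback k.hom p) (k'.left) (e) (b) (k'.hom) (p) inferInstance (pullback.fst k.hom p ≫ m.left)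
            (pullback.snd k.hom p) (by rw [assoc, Over.w m]; exact pullback.condition)) ≫ pullbackComparison U k'.hom p) ≫
            pullback.fst (U.map k'.hom) (U.map p) =
          (pullbackComparison U k.hom p ≫ @pullback.lift _ _ (pullback (U.map k.hom) (U.map p)) (U.obj k'.left) (U.obj e) (U.obj b) (U.map k'.hom) (U.map p) inferInstance (pullback.fst (U.map k.hom) (U.map p) ≫ U.map m.left)
            (pullback.snd (U.map k.hom) (U.map p)) (by rw [assoc, ← U.map_comp, Over.w m]; exact pullback.condition)) ≫ pullback.fst (U.map k'.hom) (U.map p)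
      simp only [assoc, pullbackComparison_comp_fst, pullbackComparison_comp_fst_assoc,
        ← U.map_comp, pullback.lift_fst]
    · show (U.map (@pullback.lift _ _ (pullback k.hom p) (k'.left) (e) (b) (k'.hom) (p) inferInstance (pullback.fst k.hom p ≫ m.left)
            (pullback.snd k.hom p) (by rw [assoc, Over.w m]; exact pullback.condition)) ≫ pullbackComparison U k'.hom p) ≫
            pullback.snd (U.map k'.hom) (U.map p) =
          (pullbackComparison U k.hom p ≫ @pullback.lift _ _ (pullback (U.map k.hom) (U.map p)) (U.obj k'.left) (U.obj e) (U.obj b) (U.map k'.hom) (U.map p) inferInstance (pullback.fst (U.map k.hom) (U.map p) ≫ U.map m.left)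
            (pullback.snd (U.map k.hom) (U.map p)) (by rw [assoc, ← U.map_comp, Over.w m]; exact pullback.condition)) ≫ pullback.snd (U.map k'.hom) (U.map p)
      simp only [assoc, pullbackComparison_comp_snd, pullbackComparison_comp_snd_assoc,
        ← U.map_comp, pullback.lift_snd])

lemma post_hu {e b : C} (p : e ⟶ b) : ∀ X : Over e,
    (Over.mapPullbackAdj (U.map p)).unit.app ((Over.post U).obj X) ≫
      (Over.pullback (U.map p)).map ((postAlpha U p).hom.app X) =
    (Over.post U).map ((Over.mapPullbackAdj p).unit.app X) ≫
      (postBeta U p).hom.app ((Over.map p).obj X) := by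
  intro X
  apply Over.OverMorphism.ext
  dsimp [postAlpha, postBeta]
  apply pullback.hom_ext
  · show (@pullback.lift _ _ (U.obj X.left) (U.obj X.left) (U.obj e) (U.obj b) (U.map X.hom ≫ U.map p) (U.map p) inferInstance (𝟙 (U.obj X.left)) (U.map X.hom) (id_comp _) ≫
        @pullback.lift _ _ (pullback (U.map X.hom ≫ U.map p) (U.map p)) (U.obj X.left) (U.obj e) (U.obj b) (U.map (X.hom ≫ p)) (U.map p) inferInstance (pullback.fst (U.map X.hom ≫ U.map p) (U.map p) ≫ 𝟙 (U.obj X.left))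
          (pullback.snd (U.map X.hom ≫ U.map p) (U.map p)) (by rw [comp_id, U.map_comp]; exact pullback.condition)) ≫
        pullback.fst (U.map (X.hom ≫ p)) (U.map p) =
      (U.map (@pullback.lift _ _ (X.left) (X.left) (e) (b) (X.hom ≫ p) (p) inferInstance (𝟙 X.left) X.hom (id_comp _)) ≫
        pullbackComparison U (X.hom ≫ p) p) ≫ pullback.fst (U.map (X.hom ≫ p)) (U.map p)
    simp [← U.map_comp, pullback.lift_fst, pullback.lift_snd, pullback.lift_fst_assoc, pullback.lift_snd_assoc]
  · show (@pullback.lift _ _ (U.obj X.left) (U.obj X.left) (U.obj e) (U.obj b) (U.map X.hom ≫ U.map p) (U.map p) inferInstance (𝟙 (U.obj X.left)) (U.map X.hom) (id_comp _) ≫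
        @pullback.lift _ _ (pullback (U.map X.hom ≫ U.map p) (U.map p)) (U.obj X.left) (U.obj e) (U.obj b) (U.map (X.hom ≫ p)) (U.map p) inferInstance (pullback.fst (U.map X.hom ≫ U.map p) (U.map p) ≫ 𝟙 (U.obj X.left))
          (pullback.snd (U.map X.hom ≫ U.map p) (U.map p)) (by rw [comp_id, U.map_comp]; exact pullback.condition)) ≫
        pullback.snd (U.map (X.hom ≫ p)) (U.map p) =
      (U.map (@pullback.lift _ _ (X.left) (X.left) (e) (b) (X.hom ≫ p) (p) inferInstance (𝟙 X.left) X.hom (id_comp _)) ≫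
        pullbackComparison U (X.hom ≫ p) p) ≫ pullback.snd (U.map (X.hom ≫ p)) (U.map p)
    simp [← U.map_comp, pullback.lift_fst, pullback.lift_snd, pullback.lift_fst_assoc, pullback.lift_snd_assoc]

lemma post_hc {e b : C} (p : e ⟶ b) : ∀ k : Over b,
    (postAlpha U p).hom.app ((Over.pullback p).obj k) ≫
      (Over.post U).map ((Over.mapPullbackAdj p).counit.app k) =
    (Over.map (U.map p)).map ((postBeta U p).hom.app k) ≫
      (Over.mapPullbackAdj (U.map p)).counit.app ((Over.post U).obj k) := by
  intro k
  apply Over.OverMorphism.ext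
  dsimp [postAlpha, postBeta]
  show 𝟙 (U.obj (pullback k.hom p)) ≫ U.map (𝟙 (pullback k.hom p) ≫ pullback.fst k.hom p) =
    pullbackComparison U k.hom p ≫ 𝟙 (pullback (U.map k.hom) (U.map p)) ≫
      pullback.fst (U.map k.hom) (U.map p)
  simp [← U.map_comp]

end Main

end EffDescentAux

/-- Let `U : C ⥤ D` be a fully faithful pullback-preserving functor between categories with
pullbacks.  If the codomain of any effective descent morphism out of an object in the image
of `U` is isomorphic to an object in the image of `U`, then `U` reflects effective descent
morphisms. -/
theorem reflects_effective_descent_of_codomains_in_image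
    {C D : Type*} [Category C] [Category D] [HasPullbacks C] [HasPullbacks D]
    (U : C ⥤ D) [U.Full] [U.Faithful] [PreservesLimitsOfShape WalkingCospan U]
    (H : ∀ (x : C) (z : D) (g : U.obj x ⟶ z), IsEffectiveDescentMorphism g →
      ∃ y : C, Nonempty (z ≅ U.obj y)) :
    ∀ {e b : C} (p : e ⟶ b), IsEffectiveDescentMorphism (U.map p) →
      IsEffectiveDescentMorphism p := by
  intro e b p hUp
  haveI hUp' : (Monad.comparison (Over.mapPullbackAdj (U.map p))).IsEquivalence := hUp
  show (Monad.comparison (Over.mapPullbackAdj p)).IsEquivalence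
  refine EffDescentAux.comparison_isEquivalence_of_comparison_isEquivalence
    (Over.mapPullbackAdj p) (Over.mapPullbackAdj (U.map p))
    (Over.post U) (Over.post U)
    (EffDescentAux.postAlpha U p) (EffDescentAux.postBeta U p)
    (EffDescentAux.post_hu U p) (EffDescentAux.post_hc U p) ?_
  intro w' hw
  obtain ⟨X, ⟨φ⟩⟩ := hw
  let ψ : U.obj X.left ≅ pullback w'.hom (U.map p) := (Over.forget _).mapIso φ
  have hg : IsEffectiveDescentMorphism (ψ.hom ≫ pullback.fst w'.hom (U.map p)) :=
    EffDescentAux.stability (U.map p) w' ψ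
  obtain ⟨y, ⟨ι⟩⟩ := H X.left w'.left (ψ.hom ≫ pullback.fst w'.hom (U.map p)) hg
  exact ⟨Over.mk (U.preimage (ι.inv ≫ w'.hom)),
    ⟨Over.isoMk ι.symm (by simp [Functor.map_preimage]; exact (U.map_preimage _).symm)⟩⟩
end

section
/- Let B be a category with finite limits and T = (T, e, m) a cartesian monad on B. If f : x ⟶ y is a morphism of B such that T(f) is an effective descent morphism, then f and T(T(f)) are effective descent morphisms. -/
open CategoryTheory CategoryTheory.Limits

section SplitTransport

variable {C : Type*} [Category C]

/-- Transport a split coequalizer along isomorphisms of the parallel pair. -/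
def isSplitCoequalizerOfIso {X Y X' Y' Z : C} {f g : X ⟶ Y} {f' g' : X' ⟶ Y'} {π : Y ⟶ Z}
    (eX : X ≅ X') (eY : Y ≅ Y')
    (hf : f ≫ eY.hom = eX.hom ≫ f') (hg : g ≫ eY.hom = eX.hom ≫ g')
    (q : IsSplitCoequalizer f g π) : IsSplitCoequalizer f' g' (eY.inv ≫ π) where
  rightSection := q.rightSection ≫ eY.hom
  leftSection := eY.inv ≫ q.leftSection ≫ eX.hom
  condition := by
    have hf' : f' = eX.inv ≫ f ≫ eY.hom := by rw [hf, Iso.inv_hom_id_assoc]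
    have hg' : g' = eX.inv ≫ g ≫ eY.hom := by rw [hg, Iso.inv_hom_id_assoc]
    simp [hf', hg', q.condition]
  rightSection_π := by simp
  leftSection_bottom := by
    have : eX.hom ≫ g' = g ≫ eY.hom := hg.symm
    simp [this]
  leftSection_top := by
    have : eX.hom ≫ f' = f ≫ eY.hom := hf.symm
    simp [this]

lemma hasSplitCoequalizer_of_iso {X Y X' Y' : C} {f g : X ⟶ Y} {f' g' : X' ⟶ Y'}
    (eX : X ≅ X') (eY : Y ≅ Y')
    (hf : f ≫ eY.hom = eX.hom ≫ f') (hg : g ≫ eY.hom = eX.hom ≫ g')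
    [inst : HasSplitCoequalizer f g] : HasSplitCoequalizer f' g' :=
  ⟨⟨_, _, ⟨isSplitCoequalizerOfIso eX eY hf hg
    (HasSplitCoequalizer.isSplitCoequalizer f g)⟩⟩⟩

end SplitTransport

section BC

variable {C : Type*} [Category C] [HasPullbacks C]

/-- Beck–Chevalley: for a pullback square, pulling back then post-composing agrees with
post-composing then pulling back. -/
noncomputable def pbBeckChevalley {x y a b : C} {k : x ⟶ a} {f : x ⟶ y} {g : a ⟶ b} {u : y ⟶ b}
    (hpb : IsPullback k f g u) :
    Over.pullback f ⋙ Over.map k ≅ Over.map u ⋙ Over.pullback g :=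
  NatIso.ofComponents
    (fun d =>
      Over.isoMk (((IsPullback.of_hasPullback d.hom f).paste_vert hpb.flip).isoPullback)
        (by simp [((IsPullback.of_hasPullback d.hom f).paste_vert hpb.flip).isoPullback_hom_snd]))
    (fun {d d'} φ => by
      ext
      apply pullback.hom_ext <;>
      simp [((IsPullback.of_hasPullback d.hom f).paste_vert hpb.flip).isoPullback_hom_fst,
        ((IsPullback.of_hasPullback d'.hom f).paste_vert hpb.flip).isoPullback_hom_fst,
        ((IsPullback.of_hasPullback d.hom f).paste_vert hpb.flip).isoPullback_hom_snd,
        ((IsPullback.of_hasPullback d'.hom f).paste_vert hpb.flip).isoPullback_hom_snd] <;>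
      simp [pullback.lift_fst (f := d'.hom) (g := f), pullback.lift_snd_assoc (f := d'.hom) (g := f),
        pullback.lift_fst (f := d'.hom ≫ u) (g := g), pullback.lift_snd (f := d'.hom ≫ u) (g := g),
        ((IsPullback.of_hasPullback d.hom f).paste_vert hpb.flip).isoPullback_hom_fst_assoc,
        ((IsPullback.of_hasPullback d.hom f).paste_vert hpb.flip).isoPullback_hom_snd])

end BC

section Stability

variable {C : Type*} [Category C] [HasFiniteLimits C]

/-- Effective descent morphisms are stable under pullback. -/
lemma isEffectiveDescent_of_isPullback {x y a b : C} {k : x ⟶ a} {f : x ⟶ y} {g : a ⟶ b}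
    {u : y ⟶ b} (hpb : IsPullback k f g u) (hg : IsEffectiveDescentMorphism g) :
    IsEffectiveDescentMorphism f := by
  haveI M : MonadicRightAdjoint (Over.pullback g) :=
    ⟨Over.map g, Over.mapPullbackAdj g, hg⟩
  -- the Beck–Chevalley isomorphism
  let E : Over.map u ⋙ Over.pullback g ≅ Over.pullback f ⋙ Over.map k :=
    (pbBeckChevalley hpb).symm
  -- `Over.map` functors preserve colimits
  haveI : PreservesColimitsOfSize.{0,0} (Over.map u) :=
    (Over.mapPullbackAdj u).leftAdjoint_preservesColimits
  haveI : PreservesColimitsOfSize.{0,0} (Over.map k) :=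
    (Over.mapPullbackAdj k).leftAdjoint_preservesColimits
  haveI : PreservesColimitsOfSize.{0,0} (Over.forget a) :=
    (Over.forgetAdjStar a).leftAdjoint_preservesColimits
  haveI : PreservesColimitsOfSize.{0,0} (Over.forget b) :=
    (Over.forgetAdjStar b).leftAdjoint_preservesColimits
  -- Step 0: if (φ, ψ) is `pullback f`-split, then (map u φ, map u ψ) is `pullback g`-split
  have key : ∀ {d₁ d₂ : Over y} (φ ψ : d₁ ⟶ d₂) [(Over.pullback f).IsSplitPair φ ψ],
      (Over.pullback g).IsSplitPair ((Over.map u).map φ) ((Over.map u).map ψ) := by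
    intro d₁ d₂ φ ψ hsplit
    have q := HasSplitCoequalizer.isSplitCoequalizer
      ((Over.pullback f).map φ) ((Over.pullback f).map ψ)
    have q' := q.map (Over.map k)
    exact hasSplitCoequalizer_of_iso (f := (Over.pullback f ⋙ Over.map k).map φ)
      (g := (Over.pullback f ⋙ Over.map k).map ψ)
      (f' := (Over.map u ⋙ Over.pullback g).map φ)
      (g' := (Over.map u ⋙ Over.pullback g).map ψ)
      (E.app d₁).symm (E.app d₂).symm
      (E.inv.naturality φ) (E.inv.naturality ψ)
      (inst := ⟨⟨_, _, ⟨q'⟩⟩⟩)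
  -- `pullback g` reflects isomorphisms (it is monadic)
  haveI hgEq : (Monad.comparison (Over.mapPullbackAdj g)).IsEquivalence := hg
  haveI : (Over.pullback g).ReflectsIsomorphisms := by
    constructor
    intro A B φ hiso
    haveI : IsIso ((Monad.comparison (Over.mapPullbackAdj g) ⋙
        Monad.forget (Over.mapPullbackAdj g).toMonad).map φ) := by
      rwa [NatIso.isIso_map_iff (Monad.comparisonForget (Over.mapPullbackAdj g)) φ]
    exact isIso_of_reflects_iso φ (Monad.comparison (Over.mapPullbackAdj g) ⋙
      Monad.forget (Over.mapPullbackAdj g).toMonad)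
  -- hence `pullback f` reflects isomorphisms
  haveI : (Over.pullback f).ReflectsIsomorphisms := by
    constructor
    intro A B φ hiso
    haveI : IsIso ((Over.pullback f ⋙ Over.map k).map φ) :=
      inferInstanceAs (IsIso ((Over.map k).map ((Over.pullback f).map φ)))
    haveI : IsIso ((Over.map u ⋙ Over.pullback g).map φ) := by
      rwa [NatIso.isIso_map_iff E φ]
    haveI : IsIso ((Over.pullback g).map ((Over.map u).map φ)) :=
      inferInstanceAs (IsIso ((Over.map u ⋙ Over.pullback g).map φ))
    haveI : IsIso ((Over.map u).map φ) := isIso_of_reflects_iso _ (Over.pullback g)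
    haveI : IsIso ((Over.forget y).map φ) :=
      inferInstanceAs (IsIso ((Over.forget b).map ((Over.map u).map φ)))
    exact isIso_of_reflects_iso φ (Over.forget y)
  -- existence and preservation of coequalizers of split pairs
  haveI hasC : ∀ {d₁ d₂ : Over y} (φ ψ : d₁ ⟶ d₂) [(Over.pullback f).IsSplitPair φ ψ],
      HasColimit (parallelPair ((Over.map u).map φ) ((Over.map u).map ψ) ⋙ Over.pullback g) := by
    intro d₁ d₂ φ ψ hsplit
    haveI := key φ ψ
    haveI : HasCoequalizer ((Over.pullback g).map ((Over.map u).map φ))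
        ((Over.pullback g).map ((Over.map u).map ψ)) := inferInstance
    exact hasColimit_of_iso
      (F := parallelPair ((Over.pullback g).map ((Over.map u).map φ))
        ((Over.pullback g).map ((Over.map u).map ψ)))
      (diagramIsoParallelPair _)
  haveI : Monad.HasCoequalizerOfIsSplitPair (Over.pullback f) := by
    constructor
    intro d₁ d₂ φ ψ hsplit
    haveI := key φ ψ
    haveI := hasC φ ψ
    haveI : CreatesColimit (parallelPair ((Over.map u).map φ) ((Over.map u).map ψ))
        (Over.pullback g) := Monad.createsGSplitCoequalizersOfMonadic (Over.pullback g) _ _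
    haveI : HasColimit (parallelPair ((Over.map u).map φ) ((Over.map u).map ψ)) :=
      hasColimit_of_created _ (Over.pullback g)
    haveI : HasColimit (parallelPair ((Over.map u).map φ) ((Over.map u).map ψ) ⋙
        Over.forget b) :=
      HasColimit.mk ⟨_, isColimitOfPreserves (Over.forget b) (colimit.isColimit _)⟩
    haveI : HasColimit (parallelPair φ ψ ⋙ Over.forget y) := by
      refine hasColimit_of_iso
        (F := parallelPair ((Over.map u).map φ) ((Over.map u).map ψ) ⋙ Over.forget b) ?_
      exact parallelPair.ext (Iso.refl _) (Iso.refl _) (by simp) (by simp)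
    exact inferInstance
  haveI : Monad.PreservesColimitOfIsSplitPair (Over.pullback f) := by
    constructor
    intro d₁ d₂ φ ψ hsplit
    haveI := key φ ψ
    haveI := hasC φ ψ
    haveI : CreatesColimit (parallelPair ((Over.map u).map φ) ((Over.map u).map ψ))
        (Over.pullback g) := Monad.createsGSplitCoequalizersOfMonadic (Over.pullback g) _ _
    haveI : PreservesColimit (parallelPair ((Over.map u).map φ) ((Over.map u).map ψ))
        (Over.pullback g) := inferInstance
    haveI : PreservesColimit (parallelPair φ ψ ⋙ Over.map u) (Over.pullback g) :=
      preservesColimit_of_iso_diagram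
        (K₁ := parallelPair ((Over.map u).map φ) ((Over.map u).map ψ)) _
        (diagramIsoParallelPair (parallelPair φ ψ ⋙ Over.map u)).symm
    constructor
    intro c hc
    have h1 : IsColimit ((Over.map u).mapCocone c) := isColimitOfPreserves _ hc
    have h2 : IsColimit ((Over.pullback g).mapCocone ((Over.map u).mapCocone c)) :=
      isColimitOfPreserves _ h1
    have h2' : IsColimit ((Over.map u ⋙ Over.pullback g).mapCocone c) := h2
    have h3 : IsColimit ((Over.pullback f ⋙ Over.map k).mapCocone c) :=
      IsColimit.mapCoconeEquiv E h2'
    have h4 : IsColimit ((Over.forget a).mapCocone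
        ((Over.pullback f ⋙ Over.map k).mapCocone c)) := isColimitOfPreserves _ h3
    have h5 : IsColimit ((Over.pullback f ⋙ (Over.map k ⋙ Over.forget a)).mapCocone c) := h4
    have h6 : IsColimit ((Over.pullback f ⋙ Over.forget x).mapCocone c) :=
      IsColimit.mapCoconeEquiv (Functor.isoWhiskerLeft (Over.pullback f) (Over.mapForget k)) h5
    exact ⟨isColimitOfReflects (Over.forget x) h6⟩
  exact (Monad.monadicOfHasPreservesGSplitCoequalizersOfReflectsIsomorphisms
    (Over.mapPullbackAdj f)).eqv

end Stability

/-- Let `T` be a cartesian monad (a pullback-preserving monad whose unit and multiplication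
naturality squares are pullbacks) on a category with finite limits.  If `T f` is an
effective descent morphism, then so are `f` and `T (T f)`. -/
theorem cartesianMonad_effectiveDescent
    {B : Type*} [Category B] [HasFiniteLimits B] (T : Monad B)
    [PreservesLimitsOfShape WalkingCospan T.toFunctor]
    (he : ∀ {a b : B} (f : a ⟶ b), IsPullback f (T.η.app a) (T.η.app b) (T.map f))
    (hm : ∀ {a b : B} (f : a ⟶ b),
      IsPullback (T.map (T.map f)) (T.μ.app a) (T.μ.app b) (T.map f))
    {x y : B} (f : x ⟶ y) (hf : IsEffectiveDescentMorphism (T.map f)) :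
    IsEffectiveDescentMorphism f ∧ IsEffectiveDescentMorphism (T.map (T.map f)) :=
  ⟨isEffectiveDescent_of_isPullback (he f).flip hf,
   isEffectiveDescent_of_isPullback (hm f).flip hf⟩
end
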